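/- If S is a maximum independent set of G and A is a minimal dominating set of H of maximum size Γ(H), then S × A is a minimal dominating set of the lexicographic product G[H]; consequently Γ(G[H]) ≥ α(G)·Γ(H), where Γ denotes the upper domination number and α the independence number. -/

import Mathlib

open SimpleGraph Finset

/-- Open neighborhood of a set: vertices having a neighbor in `S`. -/
def nbhd {V : Type*} (G : SimpleGraph V) (S : Set V) : Set V := {v | ∃ u ∈ S, G.Adj u v}

/-- Closed neighborhood of a vertex. -/
def closedNbhd {V : Type*} (G : SimpleGraph V) (v : V) : Set V := insert v (G.neighborSet v)

/-- `S` dominates vertex `v`. -/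
def Dominates {V : Type*} (G : SimpleGraph V) (S : Set V) (v : V) : Prop :=
  v ∈ S ∨ ∃ u ∈ S, G.Adj u v

/-- `D` is a dominating set of `G`. -/
def IsDomSet {V : Type*} (G : SimpleGraph V) (D : Set V) : Prop := ∀ v, Dominates G D v

/-- `D` is a minimal dominating set of `G`. -/
def IsMinDomSet {V : Type*} (G : SimpleGraph V) (D : Set V) : Prop :=
  IsDomSet G D ∧ ∀ D' ⊂ D, ¬ IsDomSet G D'

/-- `D` is an irreducible dominating set of `G`. -/
def IsIrredDomSet {V : Type*} (G : SimpleGraph V) (D : Set V) : Prop :=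
  IsDomSet G D ∧ ¬ ∃ u ∈ D, IsDomSet G (D \ {u}) ∧ nbhd G D = nbhd G (D \ {u})

/-- Lexicographic product of two simple graphs. -/
def lexProd {V W : Type*} (G : SimpleGraph V) (H : SimpleGraph W) : SimpleGraph (V × W) where
  Adj p q := G.Adj p.1 q.1 ∨ (p.1 = q.1 ∧ H.Adj p.2 q.2)
  symm := ⟨by
    rintro p q (h | ⟨e, h⟩)
    · exact Or.inl h.symm
    · exact Or.inr ⟨e.symm, h.symm⟩⟩
  loopless := ⟨by
    rintro p (h | ⟨_, h⟩)
    · exact G.loopless.irrefl _ h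
    · exact H.loopless.irrefl _ h⟩

/-- Projection of `D ⊆ V(G) × V(H)` to `G`. -/
def projG {V W : Type*} (D : Set (V × W)) : Set V := {x | ∃ y, (x, y) ∈ D}

/-- Fiber of `D ⊆ V(G) × V(H)` over `x ∈ V(G)`. -/
def projH {V W : Type*} (D : Set (V × W)) (x : V) : Set W := {y | (x, y) ∈ D}

/-- A set of pairwise nonadjacent vertices. -/
def IsIndep {V : Type*} (G : SimpleGraph V) (S : Set V) : Prop :=
  S.Pairwise (fun a b => ¬ G.Adj a b)

/-- The independence number. -/
noncomputable def indepNum' {V : Type*} [Fintype V] (G : SimpleGraph V) : ℕ :=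
  sSup {n | ∃ S : Finset V, IsIndep G ↑S ∧ S.card = n}

/-- The upper domination number: maximum size of a minimal dominating set. -/
noncomputable def upperDomNum {V : Type*} [Fintype V] (G : SimpleGraph V) : ℕ :=
  sSup {n | ∃ D : Finset V, IsMinDomSet G ↑D ∧ D.card = n}

theorem stmt14 {V W : Type*} [Fintype V] [Fintype W] [Nonempty V] [Nonempty W]
    (G : SimpleGraph V) (H : SimpleGraph W)
    (S : Finset V) (hSind : IsIndep G ↑S) (hScard : S.card = indepNum' G)
    (A : Finset W) (hAmin : IsMinDomSet H ↑A) (hAcard : A.card = upperDomNum H) :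
    IsMinDomSet (lexProd G H) ↑(S ×ˢ A) ∧
      indepNum' G * upperDomNum H ≤ upperDomNum (lexProd G H) := by

  classical
  have hAdom := hAmin.1
  obtain ⟨w0⟩ := (inferInstance : Nonempty W)
  have hAne : ∃ a, a ∈ A := by
    rcases hAdom w0 with h | ⟨u, hu, _⟩
    · exact ⟨w0, h⟩
    · exact ⟨u, hu⟩
  have hSdom : IsDomSet G ↑S := by
    intro x
    by_cases hx : x ∈ S
    · exact Or.inl hx
    · right
      by_contra hno
      push_neg at hno
      have hind : IsIndep G ↑(insert x S) := by
        intro a ha b hb hab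
        simp only [coe_insert, Set.mem_insert_iff, mem_coe] at ha hb
        rcases ha with rfl | ha
        · rcases hb with rfl | hb
          · exact absurd rfl hab
          · intro hadj; exact hno b hb hadj.symm
        · rcases hb with rfl | hb
          · intro hadj; exact hno a ha hadj
          · exact hSind ha hb hab
      have hcard : (insert x S).card = S.card + 1 := Finset.card_insert_of_notMem hx
      have hbdd : BddAbove {n | ∃ T : Finset V, IsIndep G ↑T ∧ T.card = n} := by
        refine ⟨Fintype.card V, ?_⟩
        rintro n ⟨T, _, rfl⟩
        exact (Finset.card_le_card (Finset.subset_univ T)).trans_eq Finset.card_univ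
      have hle : (insert x S).card ≤ indepNum' G :=
        le_csSup hbdd ⟨_, hind, rfl⟩
      omega
  have hDom : IsDomSet (lexProd G H) ↑(S ×ˢ A) := by
    rintro ⟨x, y⟩
    rcases hSdom x with hxS | ⟨s, hs, hsx⟩
    · rcases hAdom y with hyA | ⟨u, hu, huy⟩
      · left; simp only [mem_coe, mem_product]
        exact ⟨hxS, hyA⟩
      · right
        refine ⟨(x, u), ?_, Or.inr ⟨rfl, huy⟩⟩
        simp only [mem_coe, mem_product]; exact ⟨hxS, hu⟩
    · obtain ⟨a, ha⟩ := hAne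
      right
      refine ⟨(s, a), ?_, Or.inl ?_⟩
      · simp only [mem_coe, mem_product]
        exact ⟨Finset.mem_coe.mp hs, ha⟩
      · exact hsx
  have hMin : IsMinDomSet (lexProd G H) ↑(S ×ˢ A) := by
    refine ⟨hDom, ?_⟩
    rintro D' hsub hD'
    obtain ⟨⟨x0, a0⟩, hpSA, hpD'⟩ := Set.exists_of_ssubset hsub
    simp only [mem_coe, mem_product] at hpSA
    have hA'sub : {v | (x0, v) ∈ D'} ⊂ ↑A := by
      constructor
      · intro v hv
        have := hsub.1 hv
        simp only [mem_coe, mem_product] at this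
        exact this.2
      · intro hcon
        exact hpD' (hcon (Finset.mem_coe.mpr hpSA.2))
    have hA'dom : IsDomSet H {v | (x0, v) ∈ D'} := by
      intro w
      rcases hD' (x0, w) with hw | ⟨⟨u, v⟩, hq, hadj⟩
      · exact Or.inl hw
      · have huS : u ∈ S := by
          have := hsub.1 hq
          simp only [mem_coe, mem_product] at this
          exact this.1
        rcases hadj with hGadj | ⟨heq, hHadj⟩
        · exfalso
          by_cases hux : u = x0
          · exact G.loopless.irrefl _ (hux ▸ hGadj)
          · exact hSind (Finset.mem_coe.mpr huS) (Finset.mem_coe.mpr hpSA.1) hux hGadj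
        · have huq : u = x0 := heq
          subst huq
          exact Or.inr ⟨v, hq, hHadj⟩
    exact hAmin.2 _ hA'sub hA'dom
  refine ⟨hMin, ?_⟩
  have hbdd2 : BddAbove {n | ∃ D : Finset (V × W), IsMinDomSet (lexProd G H) ↑D ∧ D.card = n} := by
    refine ⟨Fintype.card (V × W), ?_⟩
    rintro n ⟨D, _, rfl⟩
    exact (Finset.card_le_card (Finset.subset_univ D)).trans_eq Finset.card_univ
  have hle : (S ×ˢ A).card ≤ upperDomNum (lexProd G H) :=
    le_csSup hbdd2 ⟨_, hMin, rfl⟩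
  calc indepNum' G * upperDomNum H = S.card * A.card := by rw [hScard, hAcard]
    _ = (S ×ˢ A).card := (Finset.card_product _ _).symm
    _ ≤ _ := hle
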